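/- arXiv:1703.07709 — 2 statements merged into one kernel-verified Lean document; each statement's English description precedes it below -/
import Mathlib

section
/- Let ι be a finite type and A : Matrix ι ι ℝ a real square matrix whose off-diagonal entries are nonnegative, i.e., A i j ≥ 0 whenever i ≠ j. Then for every t ≥ 0 and every vector v : ι → ℝ with v i ≥ 0 for all i, all components of exp(t • A) *ᵥ v are nonnegative: (exp(t • A) *ᵥ v) i ≥ 0 for all i. -/
open scoped Matrix

section Aux

attribute [local instance] Matrix.linftyOpNormedRing Matrix.linftyOpNormedAlgebra

private lemma pow_entry_nonneg {ι : Type*} [Fintype ι] [DecidableEq ι]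
    (B : Matrix ι ι ℝ) (hB : ∀ i j, 0 ≤ B i j) : ∀ (n : ℕ) (i j), 0 ≤ (B ^ n) i j := by
  intro n
  induction n with
  | zero => intro i j; simp [Matrix.one_apply]; positivity
  | succ n ih =>
    intro i j
    rw [pow_succ, Matrix.mul_apply]
    exact Finset.sum_nonneg fun k _ => mul_nonneg (ih i k) (hB k j)

private lemma exp_entry_nonneg {ι : Type*} [Fintype ι] [DecidableEq ι]
    (B : Matrix ι ι ℝ) (hB : ∀ i j, 0 ≤ B i j) (i j : ι) :
    0 ≤ NormedSpace.exp B i j := by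
  rw [NormedSpace.exp_eq_tsum ℝ]
  have hs : Summable fun n : ℕ => ((n.factorial : ℝ))⁻¹ • B ^ n := NormedSpace.expSeries_summable' B
  have hs1 : Summable fun n : ℕ => (((n.factorial : ℝ))⁻¹ • B ^ n) i := by
    exact Pi.summable.mp hs i
  have hs2 : Summable fun n : ℕ => (((n.factorial : ℝ))⁻¹ • B ^ n) i j := by
    exact Pi.summable.mp hs1 j
  show 0 ≤ (∑' n : ℕ, ((n.factorial : ℝ))⁻¹ • B ^ n) i j
  erw [tsum_apply hs, tsum_apply hs1]
  refine tsum_nonneg fun n => ?_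
  have : (((n.factorial : ℝ))⁻¹ • B ^ n) i j = ((n.factorial : ℝ))⁻¹ * (B ^ n) i j := rfl
  rw [this]
  exact mul_nonneg (by positivity) (pow_entry_nonneg B hB n i j)

end Aux

private lemma exp_metzler_entry_nonneg {ι : Type*} [Fintype ι] [DecidableEq ι]
    (A : Matrix ι ι ℝ) (hA : ∀ i j, i ≠ j → 0 ≤ A i j)
    (t : ℝ) (ht : 0 ≤ t) (i j : ι) : 0 ≤ NormedSpace.exp (t • A) i j := by
  classical
  set c : ℝ := ∑ k, |t * A k k| with hc
  have hc_nonneg : 0 ≤ c := Finset.sum_nonneg fun k _ => abs_nonneg _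
  have hc_ge : ∀ k, |t * A k k| ≤ c := fun k =>
    Finset.single_le_sum (fun k _ => abs_nonneg (t * A k k)) (Finset.mem_univ k)
  set B : Matrix ι ι ℝ := t • A + c • (1 : Matrix ι ι ℝ) with hB
  have hBnn : ∀ i j, 0 ≤ B i j := by
    intro i j
    rcases eq_or_ne i j with rfl | hij
    · have h1 : B i i = t * A i i + c := by
        simp [hB, Matrix.one_apply, Matrix.add_apply]
      rw [h1]
      have := hc_ge i
      have := neg_abs_le (t * A i i)
      linarith
    · have h1 : B i j = t * A i j := by
        simp [hB, Matrix.one_apply, Matrix.add_apply, hij]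
      rw [h1]
      exact mul_nonneg ht (hA i j hij)
  have hsplit : t • A = B + (-c) • (1 : Matrix ι ι ℝ) := by
    simp [hB, add_assoc, ← add_smul]
  have hcomm : Commute B ((-c) • (1 : Matrix ι ι ℝ)) := by
    apply Commute.smul_right
    exact Commute.one_right B
  have hexp : NormedSpace.exp (t • A)
      = NormedSpace.exp B * NormedSpace.exp ((-c) • (1 : Matrix ι ι ℝ)) := by
    rw [hsplit, Matrix.exp_add_of_commute _ _ hcomm]
  have hexp1 : NormedSpace.exp ((-c) • (1 : Matrix ι ι ℝ))
      = Real.exp (-c) • (1 : Matrix ι ι ℝ) := by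
    rw [Matrix.smul_one_eq_diagonal, Matrix.exp_diagonal]
    have : NormedSpace.exp (fun _ : ι => -c) = fun _ : ι => Real.exp (-c) := by
      funext k
      rw [Pi.coe_exp (fun _ : ι => -c) k, Real.exp_eq_exp_ℝ]
    rw [this, ← Matrix.smul_one_eq_diagonal]
  rw [hexp, hexp1]
  have : (NormedSpace.exp B * (Real.exp (-c) • (1 : Matrix ι ι ℝ))) i j
      = Real.exp (-c) * NormedSpace.exp B i j := by
    rw [Matrix.mul_smul, mul_one]
    rfl
  rw [this]
  exact mul_nonneg (Real.exp_pos _).le (exp_entry_nonneg B hBnn i j)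

/-- **Discrete positivity.** If `A` is a Metzler matrix (all off-diagonal entries
nonnegative), then for every `t ≥ 0` the matrix exponential `exp (t • A)` maps
componentwise-nonnegative vectors to componentwise-nonnegative vectors. -/
theorem matrix_exp_metzler_preserves_nonneg {ι : Type*} [Fintype ι] [DecidableEq ι]
    (A : Matrix ι ι ℝ) (hA : ∀ i j, i ≠ j → 0 ≤ A i j)
    (t : ℝ) (ht : 0 ≤ t) (v : ι → ℝ) (hv : ∀ i, 0 ≤ v i) :
    ∀ i, 0 ≤ (NormedSpace.exp (t • A) *ᵥ v) i := by
  intro i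
  rw [Matrix.mulVec, dotProduct]
  exact Finset.sum_nonneg fun j _ =>
    mul_nonneg (exp_metzler_entry_nonneg A hA t ht i j) (hv j)
end

section
/- Let α > 0 and p ∈ ℝ, and let u, ρ : ℝ × ℝ → ℝ be twice continuously differentiable functions of (x, t) with ρ(x, t) > 0 for all (x, t). Suppose that u and ρ satisfy the forward-forward mean-field game system with congestion: u_t + (p + u_x)²/(2 ρ^α) = (3/2) ρ^α and ρ_t − ∂_x( (p + u_x) ρ^{1−α} ) = 0 at every point of ℝ × ℝ. Then the function v := p + u_x satisfies the conservation law v_t + ∂_x( v²/(2 ρ^α) − (3/2) ρ^α ) = 0 at every point, so that the pair (v, ρ) solves the system of conservation laws v_t + (v²/(2ρ^α) − (3/2)ρ^α)_x = 0, ρ_t − (ρ^{1−α} v)_x = 0. -/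
/-- **The forward-forward MFG with congestion as a system of conservation laws.**
If `u, ρ` solve the first-order forward-forward mean-field game system with congestion
`u_t + (p + u_x)²/(2ρ^α) = (3/2)ρ^α`, `ρ_t − ((p + u_x) ρ^{1−α})_x = 0`, with `ρ > 0`,
then `v := p + u_x` satisfies the conservation law
`v_t + (v²/(2ρ^α) − (3/2)ρ^α)_x = 0`, so that the pair `(v, ρ)` solves the system of
conservation laws `v_t + (v²/(2ρ^α) − (3/2)ρ^α)_x = 0`, `ρ_t − (ρ^{1−α} v)_x = 0`. -/
theorem ffmfg_congestion_to_conservation_laws (α : ℝ) (hα : 0 < α) (p : ℝ)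
    (u ρ : ℝ × ℝ → ℝ) (hu : ContDiff ℝ 2 u) (hρ : ContDiff ℝ 2 ρ)
    (hρpos : ∀ x t, 0 < ρ (x, t))
    (hHJ : ∀ x t, deriv (fun s => u (x, s)) t
        + (p + deriv (fun y => u (y, t)) x) ^ 2 / (2 * ρ (x, t) ^ α)
        = (3 / 2) * ρ (x, t) ^ α)
    (hFP : ∀ x t, deriv (fun s => ρ (x, s)) t
        - deriv (fun y => (p + deriv (fun z => u (z, t)) y) * ρ (y, t) ^ (1 - α)) x
        = 0) :
    (∀ x t, deriv (fun s => p + deriv (fun y => u (y, s)) x) t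
        + deriv (fun y =>
            (p + deriv (fun z => u (z, t)) y) ^ 2 / (2 * ρ (y, t) ^ α)
              - (3 / 2) * ρ (y, t) ^ α) x = 0)
      ∧ (∀ x t, deriv (fun s => ρ (x, s)) t
          - deriv (fun y => ρ (y, t) ^ (1 - α) * (p + deriv (fun z => u (z, t)) y)) x
          = 0) := by
  -- first derivatives of `u` exist everywhere
  have hd1 : ∀ q : ℝ × ℝ, HasFDerivAt u (fderiv ℝ u q) q := fun q =>
    (hu.differentiable (by norm_num) q).hasFDerivAt
  -- the derivative map is C¹, hence differentiable
  have hcd1 : ContDiff ℝ 1 (fderiv ℝ u) := hu.fderiv_right (by norm_num)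
  have hd2 : ∀ q : ℝ × ℝ, HasFDerivAt (fderiv ℝ u) (fderiv ℝ (fderiv ℝ u) q) q :=
    fun q => (hcd1.differentiable one_ne_zero q).hasFDerivAt
  -- symmetry of the second derivative (Clairaut)
  have hsymm : ∀ (x t : ℝ) (v w : ℝ × ℝ),
      fderiv ℝ (fderiv ℝ u) (x, t) v w = fderiv ℝ (fderiv ℝ u) (x, t) w v := fun x t v w =>
    second_derivative_symmetric hd1 (hd2 (x, t)) v w
  -- curves
  have hgx : ∀ (x t : ℝ), HasDerivAt (fun y : ℝ => (y, t)) ((1 : ℝ), (0 : ℝ)) x := fun x t =>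
    (hasDerivAt_id x).prodMk (hasDerivAt_const x t)
  have hgt : ∀ (x t : ℝ), HasDerivAt (fun s : ℝ => (x, s)) ((0 : ℝ), (1 : ℝ)) t := fun x t =>
    (hasDerivAt_const t x).prodMk (hasDerivAt_id t)
  -- partial derivatives as directional derivatives
  have hux : ∀ x t : ℝ, HasDerivAt (fun y => u (y, t)) (fderiv ℝ u (x, t) (1, 0)) x := by
    intro x t
    exact (hd1 (x, t)).comp_hasDerivAt x (hgx x t)
  have hut : ∀ x t : ℝ, HasDerivAt (fun s => u (x, s)) (fderiv ℝ u (x, t) (0, 1)) t := by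
    intro x t
    exact (hd1 (x, t)).comp_hasDerivAt t (hgt x t)
  -- mixed partials
  have hmix1 : ∀ x t : ℝ, HasDerivAt (fun s => fderiv ℝ u (x, s) (1, 0))
      (fderiv ℝ (fderiv ℝ u) (x, t) (0, 1) (1, 0)) t := by
    intro x t
    have h := ((ContinuousLinearMap.apply ℝ ℝ ((1 : ℝ), (0 : ℝ))).hasFDerivAt.comp (x, t)
        (hd2 (x, t))).comp_hasDerivAt t (hgt x t)
    exact h
  have hmix2 : ∀ x t : ℝ, HasDerivAt (fun y => fderiv ℝ u (y, t) (0, 1))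
      (fderiv ℝ (fderiv ℝ u) (x, t) (1, 0) (0, 1)) x := by
    intro x t
    have h := ((ContinuousLinearMap.apply ℝ ℝ ((0 : ℝ), (1 : ℝ))).hasFDerivAt.comp (x, t)
        (hd2 (x, t))).comp_hasDerivAt x (hgx x t)
    exact h
  constructor
  · intro x t
    -- rewrite the time-derivative term
    have e1 : (fun s => p + deriv (fun y => u (y, s)) x)
        = fun s => p + fderiv ℝ u (x, s) (1, 0) := by
      funext s; rw [(hux x s).deriv]
    have ht : deriv (fun s => p + deriv (fun y => u (y, s)) x) t
        = fderiv ℝ (fderiv ℝ u) (x, t) (0, 1) (1, 0) := by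
      rw [e1]; exact (((hmix1 x t)).const_add p).deriv
    -- rewrite the flux via the HJ equation
    have e2 : (fun y => (p + deriv (fun z => u (z, t)) y) ^ 2 / (2 * ρ (y, t) ^ α)
          - (3 / 2) * ρ (y, t) ^ α)
        = fun y => -(fderiv ℝ u (y, t) (0, 1)) := by
      funext y
      have h := hHJ y t
      rw [(hut y t).deriv] at h
      linarith
    have hx : deriv (fun y => (p + deriv (fun z => u (z, t)) y) ^ 2 / (2 * ρ (y, t) ^ α)
          - (3 / 2) * ρ (y, t) ^ α) x
        = -(fderiv ℝ (fderiv ℝ u) (x, t) (1, 0) (0, 1)) := by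
      rw [e2]; exact ((hmix2 x t)).neg.deriv
    rw [ht, hx, hsymm x t (0, 1) (1, 0)]
    ring
  · intro x t
    have e : (fun y => ρ (y, t) ^ (1 - α) * (p + deriv (fun z => u (z, t)) y))
        = fun y => (p + deriv (fun z => u (z, t)) y) * ρ (y, t) ^ (1 - α) := by
      funext y; ring
    rw [e]; exact hFP x t
end
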